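/- Suppose A_λ = M_λ + E_λ are linear operators on functions ℤ^d → ℂ (for a parameter λ ≥ 1) satisfying, with constants C and exponents α, β, γ > 0 uniform in λ: (i) ‖A_λ f‖_{ℓ^∞} ≤ C λ^{−α} ‖f‖_{ℓ^1}; (ii) ‖M_λ f‖_{ℓ^∞} ≤ C λ^{−β} ‖f‖_{ℓ^1}; (iii) ‖A_λ f‖_{ℓ^2} ≤ C ‖f‖_{ℓ^2}; (iv) ‖E_λ f‖_{ℓ^2} ≤ C λ^{−γ} ‖f‖_{ℓ^2}. If α < β, then for all 1 ≤ p ≤ 2, ‖A_λ f‖_{ℓ^{p'}} ≤ C' ( λ^{−β(2/p − 1)} + λ^{−[α(2/p − 1) + γ(2 − 2/p)]} ) ‖f‖_{ℓ^p}, where C' depends only on C (not on λ), and p' is the dual exponent 1/p + 1/p' = 1. -/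

import Mathlib

open MeasureTheory ENNReal Finset

namespace Interp

noncomputable def en {X : Type*} (f : X → ℂ) (x : X) : ℝ≥0∞ := (‖f x‖₊ : ℝ≥0∞)

noncomputable def SN {X : Type*} (r : ℝ) (f : X → ℂ) : ℝ≥0∞ := (∑' x, en f x ^ r) ^ (1/r)

noncomputable def SS {X : Type*} (f : X → ℂ) : ℝ≥0∞ := ⨆ x, en f x

lemma en_ne_top {X : Type*} (f : X → ℂ) (x : X) : en f x ≠ ∞ := coe_ne_top

/-- monotone decreasing of ℓ^r norms in r, sum form -/
lemma tsum_rpow_le {X : Type*} (g : X → ℝ≥0∞) (hg : ∀ x, g x ≠ ∞) {s t : ℝ}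
    (hs : 0 < s) (hst : s ≤ t) :
    ∑' x, g x ^ t ≤ (∑' x, g x ^ s) ^ (t/s) := by
  have ht : 0 < t := lt_of_lt_of_le hs hst
  set S := ∑' x, g x ^ s with hS
  rcases eq_or_ne S ∞ with h | h
  · rw [h, ENNReal.top_rpow_of_pos (by positivity)]; exact le_top
  rcases eq_or_ne S 0 with h0 | h0
  · have hz : ∀ x, g x = 0 := by
      intro x
      have h1 : g x ^ s = 0 := by
        have hle : g x ^ s ≤ S := ENNReal.le_tsum x
        simpa [h0] using hle
      rcases (ENNReal.rpow_eq_zero_iff).mp h1 with ⟨h2, _⟩ | ⟨h2, h3⟩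
      · exact h2
      · linarith
    calc ∑' x, g x ^ t = 0 := by simp [hz, ENNReal.zero_rpow_of_pos ht]
      _ ≤ _ := zero_le
  have hts : 1 ≤ t / s := (one_le_div hs).2 hst
  calc ∑' x, g x ^ t ≤ ∑' x, (g x ^ s) * S ^ (t/s - 1) := by
        refine ENNReal.tsum_le_tsum fun x => ?_
        rcases eq_or_ne (g x) 0 with hx0 | hx0
        · rw [hx0, ENNReal.zero_rpow_of_pos ht]; exact zero_le
        have hxs : g x ^ s ≤ S := ENNReal.le_tsum x
        have hgs0 : g x ^ s ≠ 0 := by simp [ENNReal.rpow_eq_zero_iff, hx0, hg x, hs.ne', hs]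
        have hgstop : g x ^ s ≠ ∞ := by simp [ENNReal.rpow_eq_top_iff, hx0, hg x, hs.ne', hs]
        have key : g x ^ t = (g x ^ s) ^ (1:ℝ) * (g x ^ s) ^ (t/s - 1) := by
          rw [← ENNReal.rpow_add _ _ hgs0 hgstop, ← ENNReal.rpow_mul]
          congr 1
          field_simp
          ring
        rw [key, ENNReal.rpow_one]
        exact mul_le_mul_right (ENNReal.rpow_le_rpow hxs (by linarith)) _
    _ = S * S ^ (t/s - 1) := ENNReal.tsum_mul_right
    _ = S ^ (1:ℝ) * S ^ (t/s - 1) := by rw [ENNReal.rpow_one]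
    _ = S ^ (t/s) := by rw [← ENNReal.rpow_add _ _ h0 h]; congr 1; ring

lemma SN_anti {X : Type*} (f : X → ℂ) {s t : ℝ} (hs : 0 < s) (hst : s ≤ t) :
    SN t f ≤ SN s f := by
  have ht : 0 < t := lt_of_lt_of_le hs hst
  have h := tsum_rpow_le (en f) (en_ne_top f) hs hst
  have h2 := ENNReal.rpow_le_rpow h (le_of_lt (by positivity : (0:ℝ) < 1/t))
  rw [← ENNReal.rpow_mul] at h2
  rw [SN, SN]
  convert h2 using 2
  field_simp

/-- interpolation between sup-norm and ℓ². -/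
lemma SN_interp {X : Type*} (f : X → ℂ) {t : ℝ} (ht : 2 ≤ t) :
    SN t f ≤ SS f ^ (1 - 2/t) * SN 2 f ^ (2/t) := by
  have ht0 : (0:ℝ) < t := by linarith
  have step : ∑' x, en f x ^ t ≤ SS f ^ (t - 2) * ∑' x, en f x ^ (2:ℝ) := by
    rw [← ENNReal.tsum_mul_left]
    refine ENNReal.tsum_le_tsum fun x => ?_
    rcases eq_or_ne (en f x) 0 with hx0 | hx0
    · rw [hx0, ENNReal.zero_rpow_of_pos ht0]; exact zero_le
    have key : en f x ^ t = en f x ^ (t - 2) * en f x ^ (2:ℝ) := by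
      rw [← ENNReal.rpow_add _ _ hx0 (en_ne_top f x)]; congr 1; ring
    rw [key]
    exact mul_le_mul_left (ENNReal.rpow_le_rpow (le_iSup _ x) (by linarith)) _
  have h2 := ENNReal.rpow_le_rpow step (le_of_lt (by positivity : (0:ℝ) < 1/t))
  rw [ENNReal.mul_rpow_of_nonneg _ _ (by positivity), ← ENNReal.rpow_mul] at h2
  refine le_trans h2 (le_of_eq ?_)
  have e1 : (t-2) * (1/t) = 1 - 2/t := by field_simp
  have e2 : ((∑' x, en f x ^ (2:ℝ)) ^ (1/(2:ℝ))) ^ (2/t) = (∑' x, en f x ^ (2:ℝ)) ^ (1/t) := by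
    rw [← ENNReal.rpow_mul]
    congr 1
    field_simp
  simp only [SN]
  rw [e2, e1]

/-- binary Minkowski in tsum-land -/
lemma tsum_Lp_add {X : Type*} (f g : X → ℝ≥0∞) {t : ℝ} (ht : 1 ≤ t) :
    (∑' x, (f x + g x) ^ t) ^ (1/t) ≤ (∑' x, f x ^ t) ^ (1/t) + (∑' x, g x ^ t) ^ (1/t) := by
  letI : MeasurableSpace X := ⊤
  haveI : MeasurableSingletonClass X := ⟨fun _ => trivial⟩
  have hf : Measurable f := fun s _ => trivial
  have hg : Measurable g := fun s _ => trivial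
  have := ENNReal.lintegral_Lp_add_le (μ := Measure.count) hf.aemeasurable hg.aemeasurable ht
  simpa [MeasureTheory.lintegral_count] using this

lemma SN_add {X : Type*} {f g h : X → ℂ} (hfg : ∀ x, ‖f x‖₊ ≤ ‖g x‖₊ + ‖h x‖₊)
    {t : ℝ} (ht : 1 ≤ t) : SN t f ≤ SN t g + SN t h := by
  have ht0 : (0:ℝ) < t := by linarith
  refine le_trans ?_ (tsum_Lp_add (en g) (en h) ht)
  refine ENNReal.rpow_le_rpow (ENNReal.tsum_le_tsum fun x => ?_) (by positivity)
  refine ENNReal.rpow_le_rpow ?_ (le_of_lt ht0)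
  have : en f x ≤ en g x + en h x := by
    rw [en, en, en, ← ENNReal.coe_add]
    exact_mod_cast hfg x
  exact this

/-- Minkowski for finite sums -/
lemma SN_sum_le {X ι : Type*} (s : Finset ι) (g : ι → X → ℂ) {t : ℝ} (ht : 1 ≤ t) :
    SN t (fun x => ∑ k ∈ s, g k x) ≤ ∑ k ∈ s, SN t (g k) := by
  have ht0 : (0:ℝ) < t := by linarith
  induction s using Finset.cons_induction with
  | empty =>
    simp only [Finset.sum_empty]
    have h1t : (0:ℝ) < 1/t := by positivity
    have : SN t (fun _ : X => (0:ℂ)) = 0 := by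
      simp only [SN, en, nnnorm_zero, ENNReal.coe_zero, ENNReal.zero_rpow_of_pos ht0,
        tsum_zero, ENNReal.zero_rpow_of_pos h1t]
    exact le_of_eq this
  | cons a s ha ih =>
    rw [Finset.sum_cons]
    refine le_trans (SN_add (g := g a) (h := fun x => ∑ k ∈ s, g k x) (fun x => ?_) ht) ?_
    · rw [Finset.sum_cons]; exact nnnorm_add_le _ _
    · exact add_le_add_right ih _

/-- finset Hölder: ∑ a ≤ N^(1-1/r) (∑ a^r)^(1/r) -/
lemma sum_le_card_rpow {ι : Type*} (s : Finset ι) (a : ι → ℝ≥0∞) {r : ℝ} (hr : 1 ≤ r) :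
    ∑ k ∈ s, a k ≤ (s.card : ℝ≥0∞) ^ (1 - 1/r) * (∑ k ∈ s, a k ^ r) ^ (1/r) := by
  have hr0 : (0:ℝ) < r := by linarith
  rcases Finset.eq_empty_or_nonempty s with rfl | hs
  · simp
  have hN0 : (s.card : ℝ≥0∞) ≠ 0 := by simp [Finset.card_ne_zero_of_mem hs.choose_spec]
  have hNt : (s.card : ℝ≥0∞) ≠ ∞ := natCast_ne_top _
  have key : (∑ k ∈ s, a k) ^ r ≤ (s.card : ℝ≥0∞) ^ (r - 1) * ∑ k ∈ s, a k ^ r := by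
    have hmean := ENNReal.rpow_arith_mean_le_arith_mean_rpow s (fun _ => (s.card : ℝ≥0∞)⁻¹) a
      (by rw [Finset.sum_const, nsmul_eq_mul, ENNReal.mul_inv_cancel hN0 hNt]) hr
    rw [← Finset.mul_sum, ← Finset.mul_sum, ENNReal.mul_rpow_of_nonneg _ _ (le_of_lt hr0)] at hmean
    have hinv : ((s.card : ℝ≥0∞)⁻¹) ^ r = ((s.card : ℝ≥0∞) ^ r)⁻¹ := ENNReal.inv_rpow _ _
    rw [hinv] at hmean
    have hcr0 : ((s.card : ℝ≥0∞) ^ r) ≠ 0 := by simp [ENNReal.rpow_eq_zero_iff, hN0, hNt, hr0.ne']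
    have hcrt : ((s.card : ℝ≥0∞) ^ r) ≠ ∞ := by simp [ENNReal.rpow_eq_top_iff, hN0, hNt, hr0, hr0.ne']
    calc (∑ k ∈ s, a k) ^ r = (s.card : ℝ≥0∞) ^ r * (((s.card:ℝ≥0∞) ^ r)⁻¹ * (∑ k ∈ s, a k) ^ r) := by
          rw [← mul_assoc, ENNReal.mul_inv_cancel hcr0 hcrt, one_mul]
      _ ≤ (s.card : ℝ≥0∞) ^ r * ((s.card : ℝ≥0∞)⁻¹ * ∑ k ∈ s, a k ^ r) := by
          exact mul_le_mul_right hmean _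
      _ = ((s.card : ℝ≥0∞) ^ r * (s.card : ℝ≥0∞)⁻¹) * ∑ k ∈ s, a k ^ r := by ring
      _ = (s.card : ℝ≥0∞) ^ (r - 1) * ∑ k ∈ s, a k ^ r := by
          congr 1
          rw [← ENNReal.rpow_neg_one, ← ENNReal.rpow_add _ _ hN0 hNt, sub_eq_add_neg]
  have h2 := ENNReal.rpow_le_rpow key (le_of_lt (by positivity : (0:ℝ) < 1/r))
  rw [← ENNReal.rpow_mul, mul_one_div, div_self hr0.ne', ENNReal.rpow_one,
    ENNReal.mul_rpow_of_nonneg _ _ (by positivity), ← ENNReal.rpow_mul] at h2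
  rw [show (r-1)*(1/r) = 1 - 1/r by field_simp] at h2
  exact h2

/-- operator with kernel k applied to finitely supported (s, c) -/
noncomputable def Tk {Y : Type*} (k : Y → Y → ℂ) (s : Finset Y) (c : Y → ℂ) : Y → ℂ :=
  fun x => ∑ y ∈ s, c y * k y x

def K1 {Y : Type*} (k : Y → Y → ℂ) (M1 : ℝ≥0∞) : Prop := ∀ y x, (‖k y x‖₊ : ℝ≥0∞) ≤ M1

def K2 {Y : Type*} (k : Y → Y → ℂ) (M2 : ℝ≥0∞) : Prop :=
  ∀ (s : Finset Y) (c : Y → ℂ),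
    ∑' x, (‖Tk k s c x‖₊ : ℝ≥0∞) ^ (2:ℝ) ≤ M2 ^ (2:ℝ) * ∑ y ∈ s, (‖c y‖₊ : ℝ≥0∞) ^ (2:ℝ)

/-- pair (tensor) kernel on a product -/
def pairk {A B : Type*} (kA : A → A → ℂ) (kB : B → B → ℂ) :
    (A × B) → (A × B) → ℂ := fun y x => kA y.1 x.1 * kB y.2 x.2

/-- transfer of K2 along an equivalence -/
lemma K2_equiv {W Z : Type*} (e : W ≃ Z) {k : Z → Z → ℂ} {M : ℝ≥0∞} (h : K2 k M) :
    K2 (fun y x => k (e y) (e x)) M := by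
  classical
  intro s c
  have hker : ∀ x : W, Tk (fun y x => k (e y) (e x)) s c x = Tk k (s.image e) (c ∘ e.symm) (e x) := by
    intro x
    rw [Tk, Tk, Finset.sum_image (by intro a _ b _ hab; exact e.injective hab)]
    refine Finset.sum_congr rfl fun y _ => ?_
    simp
  calc ∑' x, (‖Tk (fun y x => k (e y) (e x)) s c x‖₊ : ℝ≥0∞) ^ (2:ℝ)
      = ∑' x : W, (‖Tk k (s.image e) (c ∘ e.symm) (e x)‖₊ : ℝ≥0∞) ^ (2:ℝ) := by
        congr 1; funext x; rw [hker]
    _ = ∑' z : Z, (‖Tk k (s.image e) (c ∘ e.symm) z‖₊ : ℝ≥0∞) ^ (2:ℝ) :=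
        Equiv.tsum_eq e (fun z => (‖Tk k (s.image e) (c ∘ e.symm) z‖₊ : ℝ≥0∞) ^ (2:ℝ))
    _ ≤ M ^ (2:ℝ) * ∑ y ∈ s.image e, (‖(c ∘ e.symm) y‖₊ : ℝ≥0∞) ^ (2:ℝ) := h _ _
    _ = M ^ (2:ℝ) * ∑ y ∈ s, (‖c y‖₊ : ℝ≥0∞) ^ (2:ℝ) := by
        congr 1
        rw [Finset.sum_image (by intro a _ b _ hab; exact e.injective hab)]
        refine Finset.sum_congr rfl fun y _ => ?_
        simp

/-- K2 for a pair kernel -/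
lemma K2_pair {A B : Type*} {kA : A → A → ℂ} {kB : B → B → ℂ} {MA MB : ℝ≥0∞}
    (hA : K2 kA MA) (hB : K2 kB MB) : K2 (pairk kA kB) (MA * MB) := by
  classical
  intro s c
  set sA := s.image Prod.fst with hsA
  set sB := s.image Prod.snd with hsB
  set c' : A × B → ℂ := fun y => if y ∈ s then c y else 0 with hc'
  have hsub : s ⊆ sA ×ˢ sB := by
    intro y hy
    rw [Finset.mem_product]
    exact ⟨Finset.mem_image_of_mem _ hy, Finset.mem_image_of_mem _ hy⟩
  have hTk : ∀ x, Tk (pairk kA kB) s c x = Tk (pairk kA kB) (sA ×ˢ sB) c' x := by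
    intro x
    simp only [Tk]
    have h1 : ∑ y ∈ s, c y * pairk kA kB y x = ∑ y ∈ s, c' y * pairk kA kB y x :=
      Finset.sum_congr rfl (fun y hy => by simp only [hc', if_pos hy])
    rw [h1]
    exact Finset.sum_subset hsub (fun y _ hy => by simp only [hc', if_neg hy, zero_mul])
  have hrhs : ∑ y ∈ s, (‖c y‖₊ : ℝ≥0∞) ^ (2:ℝ) = ∑ y ∈ sA ×ˢ sB, (‖c' y‖₊ : ℝ≥0∞) ^ (2:ℝ) := by
    have h1 : ∑ y ∈ s, (‖c y‖₊ : ℝ≥0∞) ^ (2:ℝ) = ∑ y ∈ s, (‖c' y‖₊ : ℝ≥0∞) ^ (2:ℝ) :=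
      Finset.sum_congr rfl (fun y hy => by simp only [hc', if_pos hy])
    rw [h1]
    exact Finset.sum_subset hsub (fun y _ hy => by
      simp only [hc', if_neg hy, nnnorm_zero, ENNReal.coe_zero,
        ENNReal.zero_rpow_of_pos (by norm_num : (0:ℝ) < 2)])
  set g : A → B → ℂ := fun x1 b => Tk kA sA (fun a => c' (a, b)) x1 with hg
  have hinner : ∀ x : A × B, Tk (pairk kA kB) (sA ×ˢ sB) c' x = Tk kB sB (g x.1) x.2 := by
    intro x
    simp only [Tk, Finset.sum_product, hg]
    rw [Finset.sum_comm]
    refine Finset.sum_congr rfl fun b _ => ?_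
    rw [Finset.sum_mul]
    refine Finset.sum_congr rfl fun a _ => ?_
    simp only [pairk]
    ring
  calc ∑' x : A × B, (‖Tk (pairk kA kB) s c x‖₊ : ℝ≥0∞) ^ (2:ℝ)
      = ∑' x : A × B, (‖Tk kB sB (g x.1) x.2‖₊ : ℝ≥0∞) ^ (2:ℝ) := by
        congr 1; funext x; rw [hTk, hinner]
    _ = ∑' x1 : A, ∑' x2 : B, (‖Tk kB sB (g x1) x2‖₊ : ℝ≥0∞) ^ (2:ℝ) :=
        ENNReal.tsum_prod (f := fun x1 x2 => (‖Tk kB sB (g x1) x2‖₊ : ℝ≥0∞) ^ (2:ℝ))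
    _ ≤ ∑' x1 : A, MB ^ (2:ℝ) * ∑ b ∈ sB, (‖g x1 b‖₊ : ℝ≥0∞) ^ (2:ℝ) :=
        ENNReal.tsum_le_tsum fun x1 => hB sB (g x1)
    _ = MB ^ (2:ℝ) * ∑ b ∈ sB, ∑' x1 : A, (‖g x1 b‖₊ : ℝ≥0∞) ^ (2:ℝ) := by
        rw [ENNReal.tsum_mul_left]
        congr 1
        exact Summable.tsum_finsetSum (fun i _ => ENNReal.summable)
    _ ≤ MB ^ (2:ℝ) * ∑ b ∈ sB, (MA ^ (2:ℝ) * ∑ a ∈ sA, (‖c' (a, b)‖₊ : ℝ≥0∞) ^ (2:ℝ)) := by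
        refine mul_le_mul_right (Finset.sum_le_sum fun b _ => ?_) _
        exact hA sA (fun a => c' (a, b))
    _ = (MA * MB) ^ (2:ℝ) * ∑ y ∈ sA ×ˢ sB, (‖c' y‖₊ : ℝ≥0∞) ^ (2:ℝ) := by
        rw [← Finset.mul_sum, ENNReal.mul_rpow_of_nonneg _ _ (by norm_num : (0:ℝ) ≤ 2),
          Finset.sum_product, Finset.sum_comm]
        ring
    _ = (MA * MB) ^ (2:ℝ) * ∑ y ∈ s, (‖c y‖₊ : ℝ≥0∞) ^ (2:ℝ) := by rw [hrhs]

/-- the n-fold tensor kernel -/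
def tk {Y : Type*} (k : Y → Y → ℂ) (n : ℕ) : (Fin n → Y) → (Fin n → Y) → ℂ :=
  fun y x => ∏ i, k (y i) (x i)

lemma K1_tk {Y : Type*} {k : Y → Y → ℂ} {M1 : ℝ≥0∞} (h : K1 k M1) (n : ℕ) :
    K1 (tk k n) (M1 ^ n) := by
  intro y x
  rw [tk]
  calc ((‖∏ i, k (y i) (x i)‖₊ : ℝ≥0∞)) = ∏ i, (‖k (y i) (x i)‖₊ : ℝ≥0∞) := by
        rw [nnnorm_prod]; push_cast; rfl
    _ ≤ M1 ^ (Finset.univ : Finset (Fin n)).card := Finset.prod_le_pow_card _ _ _ (fun i _ => h _ _)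
    _ = M1 ^ n := by simp

lemma K2_tk {Y : Type*} {k : Y → Y → ℂ} {M2 : ℝ≥0∞} (h : K2 k M2) (n : ℕ) :
    K2 (tk k n) (M2 ^ n) := by
  induction n with
  | zero =>
    intro s c
    classical
    have hTk : ∀ x, Tk (tk k 0) s c x = ∑ y ∈ s, c y := by
      intro x
      rw [Tk]
      refine Finset.sum_congr rfl fun y _ => ?_
      rw [tk]
      simp
    rcases Finset.eq_empty_or_nonempty s with rfl | ⟨y₀, hy₀⟩
    · simp [hTk, ENNReal.zero_rpow_of_pos (by norm_num : (0:ℝ) < 2)]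
    · have hs : s = {y₀} := by
        refine Finset.eq_singleton_iff_unique_mem.mpr ⟨hy₀, fun y hy => Subsingleton.elim y y₀⟩
      subst hs
      have hval : ∀ x, Tk (tk k 0) {y₀} c x = c y₀ := by intro x; rw [hTk]; simp
      rw [tsum_eq_single (fun i : Fin 0 => i.elim0)
        (fun b hb => absurd (Subsingleton.elim b _) hb)]
      rw [hval]
      simp
  | succ n ih =>
    have hpair : K2 (pairk k (tk k n)) (M2 * M2 ^ n) := K2_pair h ih
    have htrans := K2_equiv (Fin.consEquiv (fun _ : Fin (n+1) => Y)).symm hpair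
    have hk : (fun (y x : Fin (n+1) → Y) => pairk k (tk k n)
        ((Fin.consEquiv (fun _ : Fin (n+1) => Y)).symm y)
        ((Fin.consEquiv (fun _ : Fin (n+1) => Y)).symm x)) = tk k (n+1) := by
      funext y x
      simp only [pairk, tk, Fin.consEquiv, Equiv.coe_fn_symm_mk]
      rw [Fin.prod_univ_succ]
      simp [Fin.tail]
    rw [hk] at htrans
    rw [show M2 ^ (n+1) = M2 * M2 ^ n from pow_succ' M2 n]
    exact htrans

lemma rpow_two_half (x : ℝ≥0∞) : (x ^ (2:ℝ)) ^ (1/(2:ℝ)) = x := by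
  rw [← ENNReal.rpow_mul]; norm_num

/-- per-dyadic-level bound -/
lemma level_bound {Y : Type*} [Countable Y] {k : Y → Y → ℂ} {M1 M2 : ℝ≥0∞}
    (hK1 : K1 k M1) (hK2 : K2 k M2) {r r' : ℝ} (hr1 : 1 < r) (hr2 : r < 2)
    (hrr' : 1/r + 1/r' = 1) (u : Finset Y) (c : Y → ℂ) (B : ℝ≥0∞)
    (hB0 : B ≠ 0) (hBt : B ≠ ∞)
    (hu : ∀ y ∈ u, B ≤ (‖c y‖₊ : ℝ≥0∞) ∧ (‖c y‖₊ : ℝ≥0∞) ≤ 2 * B) :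
    SN r' (Tk k u c) ≤ 2 * (M1 ^ (1 - 2/r') * M2 ^ (2/r')) *
      (∑ y ∈ u, (‖c y‖₊ : ℝ≥0∞) ^ r) ^ (1/r) := by
  classical
  have hr0 : (0:ℝ) < r := by linarith
  have hinvr : 1/r' = 1 - 1/r := by linarith
  have h1r : 1/r < 1 := by rw [div_lt_one hr0]; exact hr1
  have h2r : 1/2 < 1/r := one_div_lt_one_div_of_lt hr0 hr2
  have hr'pos : (0:ℝ) < r' := by
    rcases le_or_gt r' 0 with h | h
    · exfalso
      have : 1/r' ≤ 0 := one_div_nonpos.mpr h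
      linarith
    · exact h
  have h2r' : 2 < r' := by
    have h1 : 1/r' < 1/2 := by linarith
    exact lt_of_one_div_lt_one_div hr'pos h1
  have he1 : (0:ℝ) ≤ 1 - 2/r' := by
    have : 2/r' ≤ 1 := by
      rw [div_le_one hr'pos]; linarith
    linarith
  have he2 : (0:ℝ) ≤ 2/r' := by positivity
  rcases Finset.eq_empty_or_nonempty u with rfl | hune
  · have : Tk k (∅ : Finset Y) c = fun _ => 0 := by funext x; simp [Tk]
    rw [this]
    have hz : SN r' (fun _ : Y => (0:ℂ)) = 0 := by
      simp only [SN, en, nnnorm_zero, ENNReal.coe_zero,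
        ENNReal.zero_rpow_of_pos (by linarith : (0:ℝ) < r'), tsum_zero,
        ENNReal.zero_rpow_of_pos (by positivity : (0:ℝ) < 1/r')]
    rw [hz]
    exact zero_le
  have hcard0 : ((u.card : ℝ≥0∞)) ≠ 0 := by
    simp [Finset.card_ne_zero_of_mem hune.choose_spec]
  have hcardt : ((u.card : ℝ≥0∞)) ≠ ∞ := natCast_ne_top _
  -- sup bound
  have hsup : SS (Tk k u c) ≤ M1 * ((u.card : ℝ≥0∞) * (2 * B)) := by
    refine iSup_le fun x => ?_
    have h1 : (‖Tk k u c x‖₊ : ℝ≥0∞) ≤ ∑ y ∈ u, (‖c y‖₊ : ℝ≥0∞) * (‖k y x‖₊ : ℝ≥0∞) := by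
      rw [Tk]
      calc (‖∑ y ∈ u, c y * k y x‖₊ : ℝ≥0∞) ≤ ∑ y ∈ u, (‖c y * k y x‖₊ : ℝ≥0∞) := by
            rw [← ENNReal.coe_finset_sum]
            exact_mod_cast nnnorm_sum_le _ _
        _ = ∑ y ∈ u, (‖c y‖₊ : ℝ≥0∞) * (‖k y x‖₊ : ℝ≥0∞) := by
            refine Finset.sum_congr rfl fun y _ => ?_
            rw [nnnorm_mul]; push_cast; ring
    refine le_trans h1 ?_
    calc ∑ y ∈ u, (‖c y‖₊ : ℝ≥0∞) * (‖k y x‖₊ : ℝ≥0∞)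
        ≤ ∑ y ∈ u, (2 * B) * M1 := by
          refine Finset.sum_le_sum fun y hy => ?_
          exact mul_le_mul' (hu y hy).2 (hK1 y x)
      _ = (u.card : ℝ≥0∞) * ((2 * B) * M1) := by
          rw [Finset.sum_const, nsmul_eq_mul]
      _ = M1 * ((u.card : ℝ≥0∞) * (2 * B)) := by ring
  -- ℓ² bound
  have hl2 : SN 2 (Tk k u c) ≤ M2 * ((u.card : ℝ≥0∞) ^ (1/(2:ℝ)) * (2 * B)) := by
    have h1 : ∑' x, (‖Tk k u c x‖₊ : ℝ≥0∞) ^ (2:ℝ) ≤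
        M2 ^ (2:ℝ) * ((u.card : ℝ≥0∞) * (2 * B) ^ (2:ℝ)) := by
      refine le_trans (hK2 u c) (mul_le_mul_right ?_ _)
      calc ∑ y ∈ u, (‖c y‖₊ : ℝ≥0∞) ^ (2:ℝ) ≤ ∑ y ∈ u, (2 * B) ^ (2:ℝ) := by
            refine Finset.sum_le_sum fun y hy => ?_
            exact ENNReal.rpow_le_rpow (hu y hy).2 (by norm_num)
        _ = (u.card : ℝ≥0∞) * (2 * B) ^ (2:ℝ) := by rw [Finset.sum_const, nsmul_eq_mul]
    have h2 := ENNReal.rpow_le_rpow h1 (by norm_num : (0:ℝ) ≤ 1/2)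
    rw [SN] at *
    refine le_trans h2 ?_
    rw [ENNReal.mul_rpow_of_nonneg _ _ (by norm_num : (0:ℝ) ≤ 1/2),
      ENNReal.mul_rpow_of_nonneg _ _ (by norm_num : (0:ℝ) ≤ 1/2),
      rpow_two_half, rpow_two_half]
  -- interpolate
  have hmid := SN_interp (Tk k u c) (le_of_lt h2r')
  have hA := ENNReal.rpow_le_rpow hsup he1
  have hBb := ENNReal.rpow_le_rpow hl2 he2
  have hcomb : SN r' (Tk k u c) ≤
      (M1 * ((u.card : ℝ≥0∞) * (2 * B))) ^ (1 - 2/r') *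
      (M2 * ((u.card : ℝ≥0∞) ^ (1/(2:ℝ)) * (2 * B))) ^ (2/r') :=
    le_trans hmid (mul_le_mul' hA hBb)
  -- simplify RHS
  have h2B0 : (2 * B) ≠ 0 := by simp [hB0]
  have h2Bt : (2 * B) ≠ ∞ := ENNReal.mul_ne_top (by norm_num) hBt
  have h2r'eq : 2/r' = 2*(1-1/r) := by rw [div_eq_mul_one_div, hinvr]
  have key : ((u.card:ℝ≥0∞) * (2*B)) ^ (1-2/r') * ((u.card:ℝ≥0∞) ^ (1/(2:ℝ)) * (2*B)) ^ (2/r')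
      = (u.card:ℝ≥0∞) ^ (1/r) * (2*B) := by
    rw [ENNReal.mul_rpow_of_nonneg _ _ he1, ENNReal.mul_rpow_of_nonneg _ _ he2,
      ← ENNReal.rpow_mul]
    have h2b : (2*B)^(1-2/r') * (2*B)^(2/r') = 2*B := by
      rw [← ENNReal.rpow_add _ _ h2B0 h2Bt]
      norm_num
    calc (u.card:ℝ≥0∞)^(1-2/r') * (2*B)^(1-2/r') * ((u.card:ℝ≥0∞)^(1/2*(2/r')) * (2*B)^(2/r'))
        = ((u.card:ℝ≥0∞)^(1-2/r') * (u.card:ℝ≥0∞)^(1/2*(2/r'))) * ((2*B)^(1-2/r') * (2*B)^(2/r')) := by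
          ring
      _ = (u.card:ℝ≥0∞)^(1/r) * (2*B) := by
          rw [h2b, ← ENNReal.rpow_add _ _ hcard0 hcardt]
          congr 2
          rw [h2r'eq]
          ring
  refine le_trans hcomb ?_
  rw [ENNReal.mul_rpow_of_nonneg M1 _ he1, ENNReal.mul_rpow_of_nonneg M2 _ he2]
  calc M1^(1-2/r') * ((u.card:ℝ≥0∞) * (2*B))^(1-2/r') *
        (M2^(2/r') * ((u.card:ℝ≥0∞)^(1/(2:ℝ)) * (2*B))^(2/r'))
      = (M1^(1-2/r') * M2^(2/r')) *
        (((u.card:ℝ≥0∞) * (2*B))^(1-2/r') * ((u.card:ℝ≥0∞)^(1/(2:ℝ)) * (2*B))^(2/r')) := by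
        ring
    _ = (M1^(1-2/r') * M2^(2/r')) * ((u.card:ℝ≥0∞)^(1/r) * (2*B)) := by rw [key]
    _ = 2 * (M1^(1-2/r') * M2^(2/r')) * ((u.card:ℝ≥0∞)^(1/r) * B) := by ring
    _ ≤ 2 * (M1^(1-2/r') * M2^(2/r')) * (∑ y ∈ u, (‖c y‖₊:ℝ≥0∞)^r)^(1/r) := by
        refine mul_le_mul_right ?_ _
        have hlow : (u.card:ℝ≥0∞) * B^r ≤ ∑ y ∈ u, (‖c y‖₊:ℝ≥0∞)^r := by
          calc (u.card:ℝ≥0∞) * B^r = ∑ _y ∈ u, B^r := by rw [Finset.sum_const, nsmul_eq_mul]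
            _ ≤ ∑ y ∈ u, (‖c y‖₊:ℝ≥0∞)^r :=
              Finset.sum_le_sum fun y hy => ENNReal.rpow_le_rpow (hu y hy).1 (le_of_lt hr0)
        have hl := ENNReal.rpow_le_rpow hlow (le_of_lt (by positivity : (0:ℝ) < 1/r))
        rw [ENNReal.mul_rpow_of_nonneg _ _ (by positivity : (0:ℝ) ≤ 1/r), ← ENNReal.rpow_mul,
          mul_one_div, div_self hr0.ne', ENNReal.rpow_one] at hl
        exact hl

/-- the dyadic-decomposition estimate -/
lemma core {Y : Type*} [Countable Y] {k : Y → Y → ℂ} {M1 M2 : ℝ≥0∞}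
    (hK1 : K1 k M1) (hK2 : K2 k M2) {r r' : ℝ} (hr1 : 1 < r) (hr2 : r < 2)
    (hrr' : 1/r + 1/r' = 1) (s : Finset Y) (c : Y → ℂ) (a b : ℤ)
    (hval : ∀ y ∈ s, c y ≠ 0 → (2:ℝ)^a ≤ ‖c y‖ ∧ ‖c y‖ < (2:ℝ)^b) :
    SN r' (Tk k s c) ≤ 2 * (((b-a).toNat : ℝ≥0∞)) ^ (1/r') * (M1 ^ (1 - 2/r') * M2 ^ (2/r')) *
      (∑ y ∈ s, (‖c y‖₊ : ℝ≥0∞) ^ r) ^ (1/r) := by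
  classical
  have hr0 : (0:ℝ) < r := by linarith
  have hinvr : 1/r' = 1 - 1/r := by linarith
  have h1r : 1/r < 1 := by rw [div_lt_one hr0]; exact hr1
  have h2r : 1/2 < 1/r := one_div_lt_one_div_of_lt hr0 hr2
  have hr'pos : (0:ℝ) < r' := by
    rcases le_or_gt r' 0 with h | h
    · exfalso
      have : 1/r' ≤ 0 := one_div_nonpos.mpr h
      linarith
    · exact h
  have h2r' : 2 < r' := by
    have h1 : 1/r' < 1/2 := by linarith
    exact lt_of_one_div_lt_one_div hr'pos h1
  set s' := s.filter (fun y => c y ≠ 0) with hs'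
  have hTks : ∀ x, Tk k s c x = Tk k s' c x := by
    intro x
    exact (Finset.sum_filter_of_ne (fun y _ h => left_ne_zero_of_mul h)).symm
  set lev : Y → ℤ := fun y => Int.log 2 ‖c y‖ with hlev
  have hmaps : ∀ y ∈ s', lev y ∈ Finset.Ico a b := by
    intro y hy
    rw [hs', Finset.mem_filter] at hy
    have hpos : (0:ℝ) < ‖c y‖ := norm_pos_iff.mpr hy.2
    have hv := hval y hy.1 hy.2
    rw [Finset.mem_Ico]
    constructor
    · refine (Int.zpow_le_iff_le_log (by norm_num) hpos).mp ?_
      exact_mod_cast hv.1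
    · refine (Int.lt_zpow_iff_log_lt (by norm_num) hpos).mp ?_
      exact_mod_cast hv.2
  have hdec : ∀ x, Tk k s' c x =
      ∑ j ∈ Finset.Ico a b, Tk k (s'.filter fun y => lev y = j) c x := by
    intro x
    simp only [Tk]
    exact (Finset.sum_fiberwise_of_maps_to hmaps _).symm
  have hlevel : ∀ j ∈ Finset.Ico a b,
      SN r' (Tk k (s'.filter fun y => lev y = j) c) ≤
      2 * (M1 ^ (1 - 2/r') * M2 ^ (2/r')) *
        (∑ y ∈ s'.filter (fun y => lev y = j), (‖c y‖₊ : ℝ≥0∞) ^ r) ^ (1/r) := by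
    intro j _
    set B : ℝ≥0∞ := ENNReal.ofReal ((2:ℝ)^(j:ℤ)) with hB
    have hBpos : (0:ℝ) < (2:ℝ)^(j:ℤ) := zpow_pos (by norm_num) _
    refine level_bound hK1 hK2 hr1 hr2 hrr' _ c B
      (by simp [hB, ENNReal.ofReal_pos.mpr hBpos, (ENNReal.ofReal_pos.mpr hBpos).ne'])
      ENNReal.ofReal_ne_top (fun y hy => ?_)
    rw [Finset.mem_filter, hs', Finset.mem_filter] at hy
    obtain ⟨⟨_, hy2⟩, hyl⟩ := hy
    have hpos : (0:ℝ) < ‖c y‖ := norm_pos_iff.mpr hy2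
    have hyl' : Int.log 2 ‖c y‖ = j := hyl
    have hlo : (2:ℝ)^(j:ℤ) ≤ ‖c y‖ := by
      have := Int.zpow_log_le_self (b := 2) (by norm_num) hpos
      rw [hyl'] at this
      exact_mod_cast this
    have hhi : ‖c y‖ ≤ 2 * (2:ℝ)^(j:ℤ) := by
      have h2 := Int.lt_zpow_succ_log_self (b := 2) (by norm_num) ‖c y‖
      rw [hyl'] at h2
      have : ((2:ℕ):ℝ)^(j+1) = 2 * (2:ℝ)^(j:ℤ) := by
        push_cast
        rw [zpow_add_one₀ (by norm_num : (2:ℝ) ≠ 0)]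
        ring
      rw [this] at h2
      exact le_of_lt h2
    constructor
    · rw [hB, ← enorm_eq_nnnorm, ← ofReal_norm]
      exact ENNReal.ofReal_le_ofReal hlo
    · rw [hB, ← enorm_eq_nnnorm, ← ofReal_norm]
      calc ENNReal.ofReal ‖c y‖ ≤ ENNReal.ofReal (2 * (2:ℝ)^(j:ℤ)) := ENNReal.ofReal_le_ofReal hhi
        _ = 2 * B := by
          rw [ENNReal.ofReal_mul (by norm_num : (0:ℝ) ≤ 2), hB]
          norm_num
  -- main chain
  have hstep1 : SN r' (Tk k s c) ≤
      ∑ j ∈ Finset.Ico a b, SN r' (Tk k (s'.filter fun y => lev y = j) c) := by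
    have : Tk k s c = fun x => ∑ j ∈ Finset.Ico a b, Tk k (s'.filter fun y => lev y = j) c x := by
      funext x
      rw [hTks x, hdec x]
    rw [this]
    exact SN_sum_le _ _ (by linarith)
  have hstep2 : ∑ j ∈ Finset.Ico a b, SN r' (Tk k (s'.filter fun y => lev y = j) c) ≤
      2 * (M1 ^ (1 - 2/r') * M2 ^ (2/r')) *
        ∑ j ∈ Finset.Ico a b, (∑ y ∈ s'.filter (fun y => lev y = j), (‖c y‖₊ : ℝ≥0∞) ^ r) ^ (1/r) := by
    rw [Finset.mul_sum]
    exact Finset.sum_le_sum hlevel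
  have hstep3 : ∑ j ∈ Finset.Ico a b, (∑ y ∈ s'.filter (fun y => lev y = j), (‖c y‖₊ : ℝ≥0∞) ^ r) ^ (1/r) ≤
      (((b-a).toNat : ℝ≥0∞)) ^ (1/r') * (∑ y ∈ s, (‖c y‖₊ : ℝ≥0∞) ^ r) ^ (1/r) := by
    have hH := sum_le_card_rpow (Finset.Ico a b)
      (fun j => (∑ y ∈ s'.filter (fun y => lev y = j), (‖c y‖₊ : ℝ≥0∞) ^ r) ^ (1/r))
      (le_of_lt hr1)
    have hcard : ((Finset.Ico a b).card : ℝ≥0∞) = (((b-a).toNat : ℝ≥0∞)) := by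
      rw [Int.card_Ico]
    have hpow : ∀ j, (((∑ y ∈ s'.filter (fun y => lev y = j), (‖c y‖₊ : ℝ≥0∞) ^ r) ^ (1/r)) : ℝ≥0∞) ^ r
        = ∑ y ∈ s'.filter (fun y => lev y = j), (‖c y‖₊ : ℝ≥0∞) ^ r := by
      intro j
      rw [← ENNReal.rpow_mul, one_div_mul_cancel hr0.ne', ENNReal.rpow_one]
    rw [Finset.sum_congr rfl (fun j _ => hpow j)] at hH
    have hfib : ∑ j ∈ Finset.Ico a b, ∑ y ∈ s'.filter (fun y => lev y = j), (‖c y‖₊ : ℝ≥0∞) ^ r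
        = ∑ y ∈ s', (‖c y‖₊ : ℝ≥0∞) ^ r := Finset.sum_fiberwise_of_maps_to hmaps _
    rw [hfib, hcard] at hH
    rw [show (1:ℝ) - 1/r = 1/r' by linarith] at hH
    refine le_trans hH (mul_le_mul_right ?_ _)
    refine ENNReal.rpow_le_rpow ?_ (by positivity)
    exact Finset.sum_le_sum_of_subset (Finset.filter_subset _ _)
  calc SN r' (Tk k s c) ≤ ∑ j ∈ Finset.Ico a b, SN r' (Tk k (s'.filter fun y => lev y = j) c) := hstep1
    _ ≤ 2 * (M1 ^ (1 - 2/r') * M2 ^ (2/r')) *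
        ∑ j ∈ Finset.Ico a b, (∑ y ∈ s'.filter (fun y => lev y = j), (‖c y‖₊ : ℝ≥0∞) ^ r) ^ (1/r) := hstep2
    _ ≤ 2 * (M1 ^ (1 - 2/r') * M2 ^ (2/r')) *
        ((((b-a).toNat : ℝ≥0∞)) ^ (1/r') * (∑ y ∈ s, (‖c y‖₊ : ℝ≥0∞) ^ r) ^ (1/r)) :=
      mul_le_mul_right hstep3 _
    _ = 2 * (((b-a).toNat : ℝ≥0∞)) ^ (1/r') * (M1 ^ (1 - 2/r') * M2 ^ (2/r')) *
        (∑ y ∈ s, (‖c y‖₊ : ℝ≥0∞) ^ r) ^ (1/r) := by ring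

lemma prod_rpow {ι : Type*} (s : Finset ι) (f : ι → ℝ≥0∞) {e : ℝ} (he : 0 ≤ e) :
    (∏ i ∈ s, f i) ^ e = ∏ i ∈ s, f i ^ e := by
  induction s using Finset.cons_induction with
  | empty => simp
  | cons a s ha ih =>
    rw [Finset.prod_cons, Finset.prod_cons, ENNReal.mul_rpow_of_nonneg _ _ he, ih]

lemma pow_rpow_comm (x : ℝ≥0∞) (n : ℕ) (e : ℝ) : (x ^ n) ^ e = (x ^ e) ^ n := by
  rw [← ENNReal.rpow_natCast x n, ← ENNReal.rpow_mul, mul_comm, ENNReal.rpow_mul,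
    ENNReal.rpow_natCast]

lemma tsum_pow {Y : Type*} (g : Y → ℝ≥0∞) (n : ℕ) :
    ∑' (x : Fin n → Y), ∏ i, g (x i) = (∑' y, g y) ^ n := by
  induction n with
  | zero =>
    rw [pow_zero]
    rw [tsum_eq_single (fun i : Fin 0 => i.elim0) (fun b hb => absurd (Subsingleton.elim b _) hb)]
    simp
  | succ n ih =>
    calc ∑' (x : Fin (n+1) → Y), ∏ i, g (x i)
        = ∑' p : Y × (Fin n → Y), ∏ i, g ((Fin.consEquiv (fun _ : Fin (n+1) => Y)) p i) :=
          (Equiv.tsum_eq (Fin.consEquiv (fun _ : Fin (n+1) => Y)) (fun x => ∏ i, g (x i))).symm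
      _ = ∑' p : Y × (Fin n → Y), g p.1 * ∏ i : Fin n, g (p.2 i) := by
          refine tsum_congr fun p => ?_
          rw [Fin.prod_univ_succ]
          simp [Fin.consEquiv, Fin.tail]
      _ = ∑' a, ∑' b : Fin n → Y, g a * ∏ i : Fin n, g (b i) :=
          ENNReal.tsum_prod (f := fun (a : Y) (b : Fin n → Y) => g a * ∏ i : Fin n, g (b i))
      _ = ∑' a, g a * ∑' b : Fin n → Y, ∏ i : Fin n, g (b i) := by
          refine tsum_congr fun a1 => ?_
          rw [ENNReal.tsum_mul_left]
      _ = (∑' y, g y) ^ (n+1) := by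
          rw [ih, ENNReal.tsum_mul_right, pow_succ]
          ring

lemma Tk_tensor {Y : Type*} (k : Y → Y → ℂ) (n : ℕ) (s : Finset Y) (c : Y → ℂ) (x : Fin n → Y) :
    Tk (tk k n) (Fintype.piFinset (fun _ => s)) (fun y => ∏ i, c (y i)) x = ∏ i, Tk k s c (x i) := by
  simp only [Tk, tk]
  rw [Finset.prod_univ_sum (t := fun _ : Fin n => s) (f := fun i yi => c yi * k yi (x i))]
  refine Finset.sum_congr rfl fun y _ => ?_
  rw [← Finset.prod_mul_distrib]

lemma sum_tensor_finset {Y : Type*} (n : ℕ) (s : Finset Y) (h : Y → ℝ≥0∞) :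
    ∑ y ∈ Fintype.piFinset (fun _ : Fin n => s), ∏ i, h (y i) = (∑ y ∈ s, h y) ^ n := by
  rw [← Finset.prod_univ_sum (t := fun _ : Fin n => s) (f := fun _ yi => h yi),
    Finset.prod_const]
  simp

/-- the tensor-power limiting argument -/
lemma le_of_pow_le_lin (X L A : ℝ≥0∞) (hA : A ≠ ∞)
    (h : ∀ n : ℕ, 1 ≤ n → X ^ n ≤ A * n * L ^ n) : X ≤ L := by
  rcases eq_or_ne L ∞ with rfl | hLt
  · exact le_top
  by_contra hc
  push_neg at hc
  have hRHSne : ∀ n : ℕ, A * n * L ^ n ≠ ∞ := fun n =>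
    ENNReal.mul_ne_top (ENNReal.mul_ne_top hA (natCast_ne_top n)) (ENNReal.pow_ne_top hLt)
  have hXt : X ≠ ∞ := by
    intro hX
    have h1 := h 1 le_rfl
    rw [hX, pow_one] at h1
    exact hRHSne 1 (top_le_iff.mp h1)
  set x := X.toReal with hx
  set l := L.toReal with hl
  set aa := A.toReal with haa
  have hlx : l < x := (ENNReal.toReal_lt_toReal hLt hXt).mpr hc
  have hreal : ∀ n : ℕ, 1 ≤ n → x ^ n ≤ aa * n * l ^ n := by
    intro n hn
    have h2 := ENNReal.toReal_mono (hRHSne n) (h n hn)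
    rw [ENNReal.toReal_pow, ENNReal.toReal_mul, ENNReal.toReal_mul, ENNReal.toReal_pow] at h2
    simpa using h2
  have hl0 : 0 ≤ l := ENNReal.toReal_nonneg
  rcases eq_or_lt_of_le hl0 with hl0' | hl0'
  · have h1 := hreal 1 le_rfl
    rw [← hl0'] at h1
    simp at h1
    nlinarith
  · set q := x / l with hq'
    have hq : 1 < q := (one_lt_div hl0').mpr hlx
    have hq0 : 0 < q := by linarith
    have hnorm : ‖1/q‖ < 1 := by
      rw [Real.norm_eq_abs, abs_of_pos (by positivity)]
      rw [div_lt_one hq0]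
      linarith
    have hsum := summable_pow_mul_geometric_of_norm_lt_one 1 hnorm
    have hten := hsum.tendsto_atTop_zero
    have haa0 : 0 ≤ aa := ENNReal.toReal_nonneg
    have hev := (hten.eventually_lt_const (show (0:ℝ) < 1/(aa+1) by positivity)).and
      (Filter.eventually_ge_atTop 1)
    obtain ⟨n, hn2, hn1⟩ := hev.exists
    have hqn : q ^ n ≤ aa * n := by
      have h3 := hreal n hn1
      have hxl : x ^ n = q ^ n * l ^ n := by
        rw [hq', div_pow, div_mul_cancel₀]
        exact pow_ne_zero _ (by linarith)
      rw [hxl] at h3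
      have := le_of_mul_le_mul_right h3 (pow_pos hl0' n)
      exact this
    have hsmall : (n:ℝ) ^ 1 * (1/q) ^ n < 1/(aa+1) := hn2
    have hqnpos : 0 < q ^ n := pow_pos hq0 n
    rw [pow_one, one_div, inv_pow, ← one_div] at hsmall
    have hcross : (n:ℝ) * (aa + 1) < q ^ n := by
      rw [mul_one_div] at hsmall
      have h5 := (div_lt_div_iff₀ hqnpos (by positivity : (0:ℝ) < aa + 1)).mp hsmall
      nlinarith [h5]
    have hn1' : (1:ℝ) ≤ (n:ℝ) := by exact_mod_cast hn1
    nlinarith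

/-- the master interpolation bound for kernels -/
theorem master {Y : Type*} [Countable Y] {k : Y → Y → ℂ} {M1 M2 : ℝ≥0∞}
    (hK1 : K1 k M1) (hK2 : K2 k M2) {r r' : ℝ} (hr1 : 1 < r) (hr2 : r < 2)
    (hrr' : 1/r + 1/r' = 1) (s : Finset Y) (c : Y → ℂ) :
    SN r' (Tk k s c) ≤ (M1 ^ (1 - 2/r') * M2 ^ (2/r')) *
      (∑ y ∈ s, (‖c y‖₊ : ℝ≥0∞) ^ r) ^ (1/r) := by
  classical
  have hr0 : (0:ℝ) < r := by linarith
  have hinvr : 1/r' = 1 - 1/r := by linarith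
  have h1r : 1/r < 1 := by rw [div_lt_one hr0]; exact hr1
  have h2r : 1/2 < 1/r := one_div_lt_one_div_of_lt hr0 hr2
  have hr'pos : (0:ℝ) < r' := by
    rcases le_or_gt r' 0 with h | h
    · exfalso
      have : 1/r' ≤ 0 := one_div_nonpos.mpr h
      linarith
    · exact h
  have h2r' : 2 < r' := by
    have h1 : 1/r' < 1/2 := by linarith
    exact lt_of_one_div_lt_one_div hr'pos h1
  set s' := s.filter (fun y => c y ≠ 0) with hs'
  have hTks : Tk k s c = Tk k s' c := by
    funext x
    exact (Finset.sum_filter_of_ne (fun y _ h => left_ne_zero_of_mul h)).symm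
  have hsum_mono : (∑ y ∈ s', (‖c y‖₊ : ℝ≥0∞) ^ r) ≤ ∑ y ∈ s, (‖c y‖₊ : ℝ≥0∞) ^ r :=
    Finset.sum_le_sum_of_subset (Finset.filter_subset _ _)
  rcases Finset.eq_empty_or_nonempty s' with he | hne
  · rw [hTks, he]
    have : Tk k (∅ : Finset Y) c = fun _ => 0 := by funext x; simp [Tk]
    rw [this]
    have hz : SN r' (fun _ : Y => (0:ℂ)) = 0 := by
      simp only [SN, en, nnnorm_zero, ENNReal.coe_zero,
        ENNReal.zero_rpow_of_pos (by linarith : (0:ℝ) < r'), tsum_zero,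
        ENNReal.zero_rpow_of_pos (by positivity : (0:ℝ) < 1/r')]
    rw [hz]
    exact zero_le
  -- choose dyadic range
  set lev : Y → ℤ := fun y => Int.log 2 ‖c y‖ with hlev
  have hne' : (s'.image lev).Nonempty := hne.image _
  set a : ℤ := (s'.image lev).min' hne' with ha
  set bb : ℤ := (s'.image lev).max' hne' + 1 with hbb
  have hcnz : ∀ y ∈ s', c y ≠ 0 := fun y hy => (Finset.mem_filter.mp hy).2
  have hval : ∀ y ∈ s', c y ≠ 0 → (2:ℝ)^a ≤ ‖c y‖ ∧ ‖c y‖ < (2:ℝ)^bb := by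
    intro y hy hcy
    have hpos : (0:ℝ) < ‖c y‖ := norm_pos_iff.mpr hcy
    have hmem : lev y ∈ s'.image lev := Finset.mem_image_of_mem _ hy
    have hlow : a ≤ lev y := Finset.min'_le _ _ hmem
    have hhigh : lev y + 1 ≤ bb := by
      rw [hbb]
      have := Finset.le_max' _ _ hmem
      omega
    constructor
    · calc (2:ℝ)^a ≤ (2:ℝ)^(lev y) := zpow_le_zpow_right₀ (by norm_num) hlow
        _ ≤ ‖c y‖ := by
          have := Int.zpow_log_le_self (b := 2) (by norm_num) hpos
          exact_mod_cast this
    · have hstep : ‖c y‖ < (2:ℝ)^(lev y + 1) := by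
        have := Int.lt_zpow_succ_log_self (b := 2) (by norm_num) ‖c y‖
        exact_mod_cast this
      calc ‖c y‖ < (2:ℝ)^(lev y + 1) := hstep
        _ ≤ (2:ℝ)^bb := zpow_le_zpow_right₀ (by norm_num) hhigh
  have hab : a < bb := by
    rw [hbb]
    have := Finset.min'_le _ _ (hne'.choose_spec)
    have h2 := Finset.le_max' _ _ (hne'.choose_spec)
    omega
  set W : ℕ := (bb - a).toNat with hW
  have hW1 : 1 ≤ W := by omega
  set XX := SN r' (Tk k s' c) with hXX
  set SR := (∑ y ∈ s', (‖c y‖₊ : ℝ≥0∞) ^ r) ^ (1/r) with hSR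
  set LL := (M1 ^ (1 - 2/r') * M2 ^ (2/r')) * SR with hLL
  have key : ∀ n : ℕ, 1 ≤ n → XX ^ n ≤ (2 * W : ℝ≥0∞) * n * LL ^ n := by
    intro n hn
    haveI : Nonempty (Fin n) := Fin.pos_iff_nonempty.mp (by omega)
    set cn : (Fin n → Y) → ℂ := fun y => ∏ i, c (y i) with hcn
    have hvaln : ∀ y ∈ Fintype.piFinset (fun _ : Fin n => s'), cn y ≠ 0 →
        (2:ℝ)^((n:ℤ)*a) ≤ ‖cn y‖ ∧ ‖cn y‖ < (2:ℝ)^((n:ℤ)*bb) := by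
      intro y hy hcny
      have hyi : ∀ i, y i ∈ s' := fun i => (Fintype.mem_piFinset.mp hy) i
      have hci : ∀ i, c (y i) ≠ 0 := by
        intro i
        exact Finset.prod_ne_zero_iff.mp hcny i (Finset.mem_univ i)
      have hnorm : ‖cn y‖ = ∏ i, ‖c (y i)‖ := norm_prod _ _
      constructor
      · rw [hnorm]
        have h1 : (2:ℝ)^((n:ℤ)*a) = ∏ _i : Fin n, (2:ℝ)^a := by
          rw [Finset.prod_const, Finset.card_univ, Fintype.card_fin, mul_comm (n:ℤ) a,
            zpow_mul, zpow_natCast]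
        rw [h1]
        refine Finset.prod_le_prod (fun i _ => by positivity) (fun i _ => ?_)
        exact (hval (y i) (hyi i) (hci i)).1
      · rw [hnorm]
        have h1 : (2:ℝ)^((n:ℤ)*bb) = ∏ _i : Fin n, (2:ℝ)^bb := by
          rw [Finset.prod_const, Finset.card_univ, Fintype.card_fin, mul_comm (n:ℤ) bb,
            zpow_mul, zpow_natCast]
        rw [h1]
        refine Finset.prod_lt_prod_of_nonempty (fun i _ => norm_pos_iff.mpr (hci i))
          (fun i _ => (hval (y i) (hyi i) (hci i)).2) Finset.univ_nonempty
    have hcore := core (K1_tk hK1 n) (K2_tk hK2 n) hr1 hr2 hrr'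
      (Fintype.piFinset (fun _ : Fin n => s')) cn ((n:ℤ)*a) ((n:ℤ)*bb) hvaln
    -- identify LHS
    have hLHS : SN r' (Tk (tk k n) (Fintype.piFinset (fun _ : Fin n => s')) cn) = XX ^ n := by
      rw [SN, hXX, SN, ← pow_rpow_comm]
      congr 1
      rw [← tsum_pow (fun y => en (Tk k s' c) y ^ r') n]
      refine tsum_congr fun x => ?_
      simp only [en]
      rw [show Tk (tk k n) (Fintype.piFinset (fun _ : Fin n => s')) cn x
          = ∏ i, Tk k s' c (x i) from Tk_tensor k n s' c x]
      rw [nnnorm_prod]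
      push_cast
      rw [prod_rpow _ _ (by positivity : (0:ℝ) ≤ r')]
    -- identify RHS sum
    have hRHS : (∑ y ∈ Fintype.piFinset (fun _ : Fin n => s'), (‖cn y‖₊ : ℝ≥0∞) ^ r) ^ (1/r)
        = SR ^ n := by
      rw [hSR, ← pow_rpow_comm]
      congr 1
      rw [← sum_tensor_finset n s' (fun y => (‖c y‖₊ : ℝ≥0∞) ^ r)]
      refine Finset.sum_congr rfl fun y _ => ?_
      rw [hcn, nnnorm_prod]
      push_cast
      rw [prod_rpow _ _ (le_of_lt hr0)]
    -- cardinal bound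
    have hN : (((n:ℤ)*bb - (n:ℤ)*a).toNat : ℝ≥0∞) ^ (1/r') ≤ ((n * W : ℕ) : ℝ≥0∞) := by
      have h1 : ((n:ℤ)*bb - (n:ℤ)*a).toNat = n * W := by
        have h3 : ((W:ℕ):ℤ) = bb - a := by
          rw [hW]; exact Int.toNat_of_nonneg (by omega)
        have h2 : (n:ℤ)*bb - (n:ℤ)*a = ((n * W : ℕ) : ℤ) := by
          push_cast
          rw [h3]
          ring
        rw [h2, Int.toNat_natCast]
      rw [h1]
      have hge1 : (1:ℝ≥0∞) ≤ ((n*W : ℕ) : ℝ≥0∞) := by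
        rw [show (1:ℝ≥0∞) = ((1:ℕ):ℝ≥0∞) by norm_num]
        exact_mod_cast Nat.one_le_iff_ne_zero.mpr (by positivity)
      calc (((n*W:ℕ)) : ℝ≥0∞) ^ (1/r') ≤ (((n*W:ℕ)) : ℝ≥0∞) ^ (1:ℝ) := by
            refine ENNReal.rpow_le_rpow_of_exponent_le hge1 ?_
            rw [div_le_one hr'pos]
            linarith
        _ = _ := ENNReal.rpow_one _
    rw [hLHS, hRHS] at hcore
    refine le_trans hcore ?_
    have hMn1 : ((M1^n : ℝ≥0∞)) ^ (1 - 2/r') = (M1 ^ (1-2/r'))^n := pow_rpow_comm _ _ _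
    have hMn2 : ((M2^n : ℝ≥0∞)) ^ (2/r') = (M2 ^ (2/r'))^n := pow_rpow_comm _ _ _
    calc 2 * (((n:ℤ)*bb - (n:ℤ)*a).toNat : ℝ≥0∞) ^ (1/r') * ((M1^n) ^ (1-2/r') * (M2^n) ^ (2/r')) * SR ^ n
        ≤ 2 * ((n * W : ℕ) : ℝ≥0∞) * ((M1^n) ^ (1-2/r') * (M2^n) ^ (2/r')) * SR ^ n := by
          exact mul_le_mul_left (mul_le_mul_left (mul_le_mul_right hN 2) _) _
      _ = (2 * W : ℝ≥0∞) * n * LL ^ n := by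
          rw [hMn1, hMn2, hLL, mul_pow, mul_pow]
          push_cast
          ring
  have hXL : XX ≤ LL := by
    refine le_of_pow_le_lin XX LL (2 * W) ?_ key
    exact ENNReal.mul_ne_top (by norm_num) (natCast_ne_top W)
  rw [hTks]
  refine le_trans hXL ?_
  rw [hLL, hSR]
  exact mul_le_mul_right (ENNReal.rpow_le_rpow hsum_mono (by positivity)) _

section Glue

variable {X : Type*} [Countable X] [MeasurableSpace X] [MeasurableSingletonClass X]

lemma eLp_eq_SN (f : X → ℂ) {q : ℝ≥0∞} (h0 : q ≠ 0) (ht : q ≠ ⊤) :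
    eLpNorm f q Measure.count = SN q.toReal f := by
  rw [eLpNorm_eq_lintegral_rpow_enorm_toReal h0 ht, MeasureTheory.lintegral_count, SN]
  rfl

lemma eLp_top_eq_SS (f : X → ℂ) : eLpNorm f ⊤ Measure.count = SS f := by
  rw [eLpNorm_exponent_top]
  apply le_antisymm
  · exact essSup_le_of_ae_le _ (Filter.Eventually.of_forall fun x => le_iSup (fun x => en f x) x)
  · refine iSup_le fun x => ?_
    by_contra hx
    have h := MeasureTheory.ae_le_eLpNormEssSup (f := f) (μ := Measure.count (α := X))
    rw [MeasureTheory.ae_iff] at h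
    have h2 := Measure.count_eq_zero_iff.mp h
    exact absurd h2 (Set.nonempty_iff_ne_empty.mp ⟨x, hx⟩)

variable [DecidableEq X]

noncomputable def dd (y : X) : X → ℂ := fun x => if x = y then 1 else 0

lemma dd_nnnorm (y x : X) : (‖dd y x‖₊ : ℝ≥0∞) = if x = y then 1 else 0 := by
  rw [dd]
  split <;> simp

lemma eLp_one_dd (y : X) : eLpNorm (dd y) 1 Measure.count = 1 := by
  rw [eLp_eq_SN _ (by norm_num) (by norm_num), SN]
  norm_num
  simp only [en, ENNReal.rpow_one]
  rw [tsum_congr (fun x => dd_nnnorm y x), tsum_eq_single y (fun b hb => if_neg hb), if_pos rfl]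

lemma restr_eq_sum (s : Finset X) (f : X → ℂ) :
    (fun x => if x ∈ s then f x else 0) = ∑ y ∈ s, f y • dd y := by
  funext x
  rw [Finset.sum_apply]
  simp only [Pi.smul_apply, dd, smul_eq_mul, mul_ite, mul_one, mul_zero]
  rw [Finset.sum_ite_eq s x f]

lemma apply_restr {T : (X → ℂ) → (X → ℂ)} (hT : IsLinearMap ℂ T) (s : Finset X) (f : X → ℂ) :
    T (fun x => if x ∈ s then f x else 0) = fun x => ∑ y ∈ s, f y * T (dd y) x := by
  rw [restr_eq_sum]
  have h1 : T (∑ y ∈ s, f y • dd y) = ∑ y ∈ s, f y • T (dd y) := by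
    have h2 : T (∑ y ∈ s, f y • dd y) = IsLinearMap.mk' T hT (∑ y ∈ s, f y • dd y) := rfl
    rw [h2, map_sum]
    refine Finset.sum_congr rfl fun y _ => ?_
    rw [_root_.map_smul]
    rfl
  rw [h1]
  funext x
  rw [Finset.sum_apply]
  simp [smul_eq_mul]

lemma sq_sum_restr (s : Finset X) (f : X → ℂ) {e : ℝ} (he : 0 < e) :
    ∑' x, en (fun x => if x ∈ s then f x else 0) x ^ e = ∑ y ∈ s, (‖f y‖₊ : ℝ≥0∞) ^ e := by
  rw [tsum_eq_sum (s := s) (fun b hb => by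
    simp [en, if_neg hb, ENNReal.zero_rpow_of_pos he])]
  refine Finset.sum_congr rfl fun y hy => by simp [en, if_pos hy]

lemma eLp_two (g : X → ℂ) : eLpNorm g 2 Measure.count = SN 2 g := by
  rw [eLp_eq_SN g (by norm_num) (by norm_num)]
  simp

/-- generic kernel sup bound from an `ℓ¹ → ℓ^∞` operator bound -/
lemma K1_gen {T : (X → ℂ) → (X → ℂ)} {c0 : ℝ≥0∞}
    (hb : ∀ g, eLpNorm (T g) ⊤ Measure.count ≤ c0 * eLpNorm g 1 Measure.count) :
    K1 (fun y x => T (dd y) x) c0 := by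
  intro y x
  have h1 : (‖T (dd y) x‖₊ : ℝ≥0∞) ≤ SS (T (dd y)) := le_iSup (fun t => en (T (dd y)) t) x
  refine le_trans h1 ?_
  rw [← eLp_top_eq_SS]
  calc eLpNorm (T (dd y)) ⊤ Measure.count ≤ c0 * eLpNorm (dd y) 1 Measure.count := hb (dd y)
    _ = c0 := by rw [eLp_one_dd, mul_one]

/-- generic kernel `K2` from an `ℓ² → ℓ²` operator bound -/
lemma K2_gen {T : (X → ℂ) → (X → ℂ)} (hT : IsLinearMap ℂ T) {c2 : ℝ≥0∞}
    (hb : ∀ g, eLpNorm (T g) 2 Measure.count ≤ c2 * eLpNorm g 2 Measure.count) :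
    K2 (fun y x => T (dd y) x) c2 := by
  intro t cc
  have hTk : Tk (fun y x => T (dd y) x) t cc = T (fun x => if x ∈ t then cc x else 0) := by
    rw [apply_restr hT]
    rfl
  have hsq : ∀ z : ℝ≥0∞, (z ^ (1/(2:ℝ))) ^ (2:ℝ) = z := by
    intro z
    rw [← ENNReal.rpow_mul]
    norm_num
  have h1 : ∑' x, (‖Tk (fun y x => T (dd y) x) t cc x‖₊ : ℝ≥0∞) ^ (2:ℝ)
      = (eLpNorm (T (fun x => if x ∈ t then cc x else 0)) 2 Measure.count) ^ (2:ℝ) := by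
    rw [eLp_two, SN, hsq, hTk]
    rfl
  rw [h1]
  calc (eLpNorm (T (fun x => if x ∈ t then cc x else 0)) 2 Measure.count) ^ (2:ℝ)
      ≤ (c2 * eLpNorm (fun x => if x ∈ t then cc x else 0) 2 Measure.count) ^ (2:ℝ) :=
        ENNReal.rpow_le_rpow (hb _) (by norm_num)
    _ = c2 ^ (2:ℝ) * (eLpNorm (fun x => if x ∈ t then cc x else 0) 2 Measure.count) ^ (2:ℝ) :=
        ENNReal.mul_rpow_of_nonneg _ _ (by norm_num)
    _ = c2 ^ (2:ℝ) * ∑ y ∈ t, (‖cc y‖₊ : ℝ≥0∞) ^ (2:ℝ) := by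
        rw [eLp_two, SN, hsq, sq_sum_restr t cc (by norm_num : (0:ℝ) < 2)]

end Glue

end Interp

open Interp

set_option maxHeartbeats 2000000 in
/-- the interpolation proposition (Proposition 1 of the paper).
If `A_λ = M_λ + E_λ` with the four endpoint bounds (i)–(iv) uniform in `λ ≥ 1`
and `α < β`, then for `1 ≤ p ≤ 2` one has the `ℓ^p → ℓ^{p'}` bound with
constant `C'` independent of `λ`. -/
theorem interpolation_proposition (d : ℕ)
    (A M E : ℝ → ((Fin d → ℤ) → ℂ) → ((Fin d → ℤ) → ℂ))
    (hA_lin : ∀ lam, IsLinearMap ℂ (A lam))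
    (hM_lin : ∀ lam, IsLinearMap ℂ (M lam))
    (hE_lin : ∀ lam, IsLinearMap ℂ (E lam))
    (hsum : ∀ lam f x, A lam f x = M lam f x + E lam f x)
    (C α β γ : ℝ) (hC : 0 < C) (hα : 0 < α) (hβ : 0 < β) (hγ : 0 < γ)
    (hi : ∀ lam ≥ (1 : ℝ), ∀ f, eLpNorm (A lam f) ⊤ Measure.count ≤
      ENNReal.ofReal (C * lam ^ (-α)) * eLpNorm f 1 Measure.count)
    (hii : ∀ lam ≥ (1 : ℝ), ∀ f, eLpNorm (M lam f) ⊤ Measure.count ≤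
      ENNReal.ofReal (C * lam ^ (-β)) * eLpNorm f 1 Measure.count)
    (hiii : ∀ lam ≥ (1 : ℝ), ∀ f, eLpNorm (A lam f) 2 Measure.count ≤
      ENNReal.ofReal C * eLpNorm f 2 Measure.count)
    (hiv : ∀ lam ≥ (1 : ℝ), ∀ f, eLpNorm (E lam f) 2 Measure.count ≤
      ENNReal.ofReal (C * lam ^ (-γ)) * eLpNorm f 2 Measure.count)
    (hαβ : α < β) :
    ∃ C' > (0 : ℝ), ∀ lam ≥ (1 : ℝ), ∀ p p' : ℝ≥0∞, 1 ≤ p → p ≤ 2 →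
      1 / p + 1 / p' = 1 → ∀ f,
      eLpNorm (A lam f) p' Measure.count ≤
        ENNReal.ofReal (C' * (lam ^ (-(β * (2 / p.toReal - 1))) +
          lam ^ (-(α * (2 / p.toReal - 1) + γ * (2 - 2 / p.toReal))))) *
          eLpNorm f p Measure.count := by
  classical
  refine ⟨4*C, by positivity, ?_⟩
  intro lam hlam p p' hpge1 hple2 hpp' f
  have hlam0 : (0:ℝ) < lam := by linarith
  set E1 : ℝ := β * (2 / p.toReal - 1) with hE1
  set E2 : ℝ := α * (2 / p.toReal - 1) + γ * (2 - 2 / p.toReal) with hE2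
  have hcoefpos : 0 < 4*C * (lam ^ (-E1) + lam ^ (-E2)) := by positivity
  by_cases hp1' : p = 1
  · -- p = 1, p' = ∞
    have hp'top : p' = ⊤ := by
      rw [hp1'] at hpp'
      norm_num at hpp'
      have h0 : p'⁻¹ = 0 := (ENNReal.add_right_inj ENNReal.one_ne_top).mp
        (by rw [hpp', ENNReal.inv_top, add_zero])
      rwa [ENNReal.inv_eq_zero] at h0
    rw [hp'top]
    refine le_trans (hi lam hlam f) ?_
    rw [hp1']
    refine mul_le_mul' (ENNReal.ofReal_le_ofReal ?_) ?_
    · rw [hE1, hE2, hp1']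
      norm_num
      have h1 : (0:ℝ) < lam ^ (-α) := Real.rpow_pos_of_pos hlam0 _
      have h2 : (0:ℝ) < lam ^ (-β) := Real.rpow_pos_of_pos hlam0 _
      nlinarith
    · exact le_rfl
  by_cases hp2' : p = 2
  · -- p = 2, p' = 2
    have hp'2 : p' = 2 := by
      rw [hp2'] at hpp'
      have h0 : 1/p' = 1/2 := by
        refine (ENNReal.add_right_inj (a := (1:ℝ≥0∞)/2) (by norm_num)).mp ?_
        rw [hpp', ENNReal.div_add_div_same]
        norm_num
        exact (ENNReal.div_self (by norm_num) (by norm_num)).symm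
      have := congrArg (fun z : ℝ≥0∞ => z⁻¹) h0
      simpa [one_div] using this
    rw [hp'2, hp2']
    refine le_trans (hiii lam hlam f) ?_
    refine mul_le_mul' (ENNReal.ofReal_le_ofReal ?_) le_rfl
    rw [hE1, hE2, hp2']
    norm_num
    have h2 : (0:ℝ) < lam ^ (-γ) := Real.rpow_pos_of_pos hlam0 _
    nlinarith
  -- main case 1 < p < 2
  have hpt : p ≠ ⊤ := by
    intro h
    rw [h] at hple2
    simp at hple2
  have hp0 : p ≠ 0 := by
    intro h
    rw [h] at hpge1
    simp at hpge1
  set r : ℝ := p.toReal with hrdef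
  have hr1 : 1 < r := by
    have h := (ENNReal.toReal_lt_toReal (by norm_num : (1:ℝ≥0∞) ≠ ⊤) hpt).mpr
      (lt_of_le_of_ne hpge1 (Ne.symm hp1'))
    simpa using h
  have hr2 : r < 2 := by
    have h := (ENNReal.toReal_lt_toReal hpt (by norm_num : (2:ℝ≥0∞) ≠ ⊤)).mpr
      (lt_of_le_of_ne hple2 hp2')
    simpa using h
  have hr0 : (0:ℝ) < r := by linarith
  have hp'0 : p' ≠ 0 := by
    intro h
    rw [h] at hpp'
    simp at hpp'
  have hp't : p' ≠ ⊤ := by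
    intro h
    rw [h] at hpp'
    simp only [one_div, ENNReal.inv_top, add_zero, ENNReal.inv_eq_one] at hpp'
    exact hp1' hpp'
  set r' : ℝ := p'.toReal with hr'def
  have hrr' : 1/r + 1/r' = 1 := by
    have h := congrArg ENNReal.toReal hpp'
    rw [ENNReal.toReal_add (by simp [one_div, hp0]) (by simp [one_div, hp'0]),
      one_div, one_div, ENNReal.toReal_inv, ENNReal.toReal_inv] at h
    simpa [one_div] using h
  have hinvr : 1/r' = 1 - 1/r := by linarith
  have h1r : 1/r < 1 := by rw [div_lt_one hr0]; exact hr1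
  have h2rr : 1/2 < 1/r := one_div_lt_one_div_of_lt hr0 hr2
  have hr'pos : (0:ℝ) < r' := by
    rcases le_or_gt r' 0 with h | h
    · exfalso
      have : 1/r' ≤ 0 := one_div_nonpos.mpr h
      linarith
    · exact h
  have h2r' : 2 < r' := by
    have h1 : 1/r' < 1/2 := by linarith
    exact lt_of_one_div_lt_one_div hr'pos h1
  have ha1 : 2/r' = 2*(1/r') := by ring
  have ha2 : 2/r = 2*(1/r) := by ring
  have hid1 : 1 - 2/r' = 2/r - 1 := by rw [ha1, ha2, hinvr]; ring
  have hid2 : 2/r' = 2 - 2/r := by rw [ha1, ha2, hinvr]; ring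
  -- trivial case ‖f‖ₚ = ∞
  by_cases hfin : eLpNorm f p Measure.count = ∞
  · rw [hfin, ENNReal.mul_top (by
      exact (ENNReal.ofReal_pos.mpr hcoefpos).ne')]
    exact le_top
  -- finite case
  have hSP : eLpNorm f p Measure.count = SN r f := eLp_eq_SN f hp0 hpt
  have hSfin : (∑' x, en f x ^ r) ≠ ∞ := by
    intro h
    apply hfin
    rw [hSP, SN, h, ENNReal.top_rpow_of_pos (by positivity)]
  rw [eLp_eq_SN (A lam f) hp'0 hp't, ← hr'def]
  refine ENNReal.le_of_forall_pos_le_add fun ε hε hfin' => ?_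
  have hCof : (ENNReal.ofReal C + 1) ≠ 0 :=
    (lt_of_lt_of_le zero_lt_one le_add_self).ne'
  have hCoft : (ENNReal.ofReal C + 1) ≠ ⊤ := by
    simp [ENNReal.add_ne_top]
  set δ0 : ℝ≥0∞ := ((ε : ℝ≥0∞) / (ENNReal.ofReal C + 1)) ^ r with hδ0
  have hδ0pos : 0 < δ0 := by
    refine ENNReal.rpow_pos (ENNReal.div_pos ?_ hCoft) ?_
    · exact_mod_cast hε.ne'
    · rw [div_eq_mul_inv]
      exact ENNReal.mul_ne_top coe_ne_top (ENNReal.inv_ne_top.mpr hCof)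
  have hten := ENNReal.tendsto_tsum_compl_atTop_zero (f := fun x => en f x ^ r) hSfin
  obtain ⟨s, hs⟩ := (hten.eventually_lt_const hδ0pos).exists
  set f1 : (Fin d → ℤ) → ℂ := fun x => if x ∈ s then f x else 0 with hf1
  set f2 : (Fin d → ℤ) → ℂ := fun x => if x ∈ s then 0 else f x with hf2
  have hsplit : ∀ x, A lam f x = A lam f1 x + A lam f2 x := by
    have hff : f = f1 + f2 := by
      funext x
      by_cases h : x ∈ s <;> simp [hf1, hf2, h]
    intro x
    conv_lhs => rw [hff]
    rw [(hA_lin lam).map_add]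
    rfl
  have htri : SN r' (A lam f) ≤ SN r' (A lam f1) + SN r' (A lam f2) :=
    SN_add (fun x => by rw [hsplit x]; exact nnnorm_add_le _ _) (by linarith)
  -- tail bound
  have htail : SN r' (A lam f2) ≤ (ε : ℝ≥0∞) := by
    have hf2tail : ∑' x, en f2 x ^ r < δ0 := by
      have heq : (∑' (b : {x // x ∉ s}), en f (b : (Fin d → ℤ)) ^ r) = ∑' x, en f2 x ^ r := by
        rw [show (∑' (b : {x // x ∉ s}), en f (b : (Fin d → ℤ)) ^ r)
            = ∑' x, Set.indicator {x | x ∉ s} (fun x => en f x ^ r) x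
          from tsum_subtype {x | x ∉ s} (fun x => en f x ^ r)]
        refine tsum_congr fun x => ?_
        by_cases h : x ∈ s
        · simp [Set.indicator_apply, h, hf2, en, ENNReal.zero_rpow_of_pos hr0]
        · simp [Set.indicator_apply, h, hf2, en]
      rw [← heq]
      exact hs
    calc SN r' (A lam f2) ≤ SN 2 (A lam f2) := SN_anti _ (by norm_num) (by linarith)
      _ = eLpNorm (A lam f2) 2 Measure.count := (eLp_two _).symm
      _ ≤ ENNReal.ofReal C * eLpNorm f2 2 Measure.count := hiii lam hlam f2
      _ = ENNReal.ofReal C * SN 2 f2 := by rw [eLp_two]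
      _ ≤ ENNReal.ofReal C * SN r f2 :=
          mul_le_mul_right (SN_anti f2 (by linarith) (by linarith)) _
      _ ≤ ENNReal.ofReal C * (δ0 ^ (1/r)) := by
          refine mul_le_mul_right ?_ _
          rw [SN]
          exact ENNReal.rpow_le_rpow (le_of_lt hf2tail) (by positivity)
      _ ≤ (ENNReal.ofReal C + 1) * ((ε : ℝ≥0∞) / (ENNReal.ofReal C + 1)) := by
          refine mul_le_mul' le_self_add (le_of_eq ?_)
          rw [hδ0, ← ENNReal.rpow_mul, mul_one_div, div_self hr0.ne', ENNReal.rpow_one]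
      _ = (ε : ℝ≥0∞) := ENNReal.mul_div_cancel' (fun h => absurd h hCof) (fun h => absurd h hCoft)
  -- main bound
  set kM : (Fin d → ℤ) → (Fin d → ℤ) → ℂ := fun y x => M lam (dd y) x with hkM
  set kE : (Fin d → ℤ) → (Fin d → ℤ) → ℂ := fun y x => E lam (dd y) x with hkE
  have hmeas : ∀ g : (Fin d → ℤ) → ℂ, AEStronglyMeasurable g (Measure.count) :=
    fun g => (measurable_of_countable g).aestronglyMeasurable
  have hK1M : K1 kM (ENNReal.ofReal (C * lam ^ (-β))) := K1_gen (hii lam hlam)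
  have hMbound : ∀ g, eLpNorm (M lam g) 2 Measure.count ≤
      ENNReal.ofReal (2*C) * eLpNorm g 2 Measure.count := by
    intro g
    have hMg : M lam g = A lam g - E lam g := by
      funext x
      rw [Pi.sub_apply, hsum lam g x]
      ring
    calc eLpNorm (M lam g) 2 Measure.count = eLpNorm (A lam g - E lam g) 2 Measure.count := by
          rw [hMg]
      _ ≤ eLpNorm (A lam g) 2 Measure.count + eLpNorm (E lam g) 2 Measure.count :=
          eLpNorm_sub_le (hmeas _) (hmeas _) one_le_two
      _ ≤ ENNReal.ofReal C * eLpNorm g 2 Measure.count +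
          ENNReal.ofReal (C * lam ^ (-γ)) * eLpNorm g 2 Measure.count :=
          add_le_add (hiii lam hlam g) (hiv lam hlam g)
      _ = (ENNReal.ofReal C + ENNReal.ofReal (C * lam ^ (-γ))) * eLpNorm g 2 Measure.count :=
          (add_mul _ _ _).symm
      _ ≤ ENNReal.ofReal (2*C) * eLpNorm g 2 Measure.count := by
          refine mul_le_mul_left ?_ _
          rw [← ENNReal.ofReal_add (by positivity) (by positivity)]
          refine ENNReal.ofReal_le_ofReal ?_
          have := Real.rpow_le_one_of_one_le_of_nonpos hlam (by linarith : -γ ≤ 0)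
          nlinarith
  have hK2M : K2 kM (ENNReal.ofReal (2*C)) := K2_gen (hM_lin lam) hMbound
  have hK1E : K1 kE (ENNReal.ofReal (2*C * lam ^ (-α))) := by
    intro y x
    have hK1A := K1_gen (T := A lam) (hi lam hlam)
    have hEsplit : kE y x = A lam (dd y) x - M lam (dd y) x := by
      rw [hkE, hsum lam (dd y) x]
      ring
    calc (‖kE y x‖₊ : ℝ≥0∞) = (‖A lam (dd y) x - M lam (dd y) x‖₊ : ℝ≥0∞) := by rw [hEsplit]
      _ ≤ (‖A lam (dd y) x‖₊ : ℝ≥0∞) + (‖M lam (dd y) x‖₊ : ℝ≥0∞) := by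
          rw [← ENNReal.coe_add]
          exact_mod_cast nnnorm_sub_le _ _
      _ ≤ ENNReal.ofReal (C * lam ^ (-α)) + ENNReal.ofReal (C * lam ^ (-β)) :=
          add_le_add (hK1A y x) (hK1M y x)
      _ ≤ ENNReal.ofReal (2*C * lam ^ (-α)) := by
          rw [← ENNReal.ofReal_add (by positivity) (by positivity)]
          refine ENNReal.ofReal_le_ofReal ?_
          have h1 : lam ^ (-β) ≤ lam ^ (-α) :=
            Real.rpow_le_rpow_of_exponent_le hlam (by linarith)
          nlinarith
  have hK2E : K2 kE (ENNReal.ofReal (C * lam ^ (-γ))) := K2_gen (hE_lin lam) (hiv lam hlam)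
  have hMf1 : M lam f1 = Tk kM s f := by
    rw [hf1, apply_restr (hM_lin lam)]
    rfl
  have hEf1 : E lam f1 = Tk kE s f := by
    rw [hf1, apply_restr (hE_lin lam)]
    rfl
  have hMmaster := master hK1M hK2M hr1 hr2 hrr' s f
  have hEmaster := master hK1E hK2E hr1 hr2 hrr' s f
  rw [← hMf1] at hMmaster
  rw [← hEf1] at hEmaster
  -- coefficient bounds
  have hcoefM : (ENNReal.ofReal (C * lam ^ (-β))) ^ (1 - 2/r') * (ENNReal.ofReal (2*C)) ^ (2/r')
      ≤ ENNReal.ofReal (2*C * lam ^ (-E1)) := by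
    rw [ENNReal.ofReal_rpow_of_pos (by positivity), ENNReal.ofReal_rpow_of_pos (by positivity),
      ← ENNReal.ofReal_mul (by positivity)]
    refine ENNReal.ofReal_le_ofReal ?_
    rw [Real.mul_rpow (by positivity) (by positivity),
      Real.mul_rpow (by positivity) (by positivity)]
    have hCe : C ^ (1-2/r') * C ^ (2/r') = C := by
      rw [← Real.rpow_add hC]
      norm_num
    have hle : (lam ^ (-β)) ^ (1-2/r') = lam ^ (-E1) := by
      rw [← Real.rpow_mul (le_of_lt hlam0)]
      congr 1
      rw [hE1, hid1]
      ring
    have h2e : (2:ℝ) ^ (2/r') ≤ 2 := by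
      have := Real.rpow_le_rpow_of_exponent_le (by norm_num : (1:ℝ) ≤ 2)
        (show 2/r' ≤ 1 by rw [div_le_one hr'pos]; linarith)
      simpa using this
    calc C ^ (1-2/r') * (lam ^ (-β)) ^ (1-2/r') * ((2:ℝ) ^ (2/r') * C ^ (2/r'))
        = (C ^ (1-2/r') * C ^ (2/r')) * (lam ^ (-β)) ^ (1-2/r') * (2:ℝ) ^ (2/r') := by ring
      _ = C * lam ^ (-E1) * (2:ℝ) ^ (2/r') := by rw [hCe, hle]
      _ ≤ C * lam ^ (-E1) * 2 := by
          refine mul_le_mul_of_nonneg_left h2e (by positivity)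
      _ = 2*C * lam ^ (-E1) := by ring
  have hcoefE : (ENNReal.ofReal (2*C * lam ^ (-α))) ^ (1 - 2/r') *
      (ENNReal.ofReal (C * lam ^ (-γ))) ^ (2/r')
      ≤ ENNReal.ofReal (2*C * lam ^ (-E2)) := by
    rw [ENNReal.ofReal_rpow_of_pos (by positivity), ENNReal.ofReal_rpow_of_pos (by positivity),
      ← ENNReal.ofReal_mul (by positivity)]
    refine ENNReal.ofReal_le_ofReal ?_
    rw [Real.mul_rpow (by positivity) (by positivity),
      Real.mul_rpow (by positivity) (by positivity),
      Real.mul_rpow (by positivity) (by positivity)]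
    have hCe : C ^ (1-2/r') * C ^ (2/r') = C := by
      rw [← Real.rpow_add hC]
      norm_num
    have hle2 : (lam ^ (-α)) ^ (1-2/r') * (lam ^ (-γ)) ^ (2/r') = lam ^ (-E2) := by
      rw [← Real.rpow_mul (le_of_lt hlam0), ← Real.rpow_mul (le_of_lt hlam0),
        ← Real.rpow_add hlam0]
      congr 1
      rw [hE2, hid1, hid2]
      ring
    have h2e : (2:ℝ) ^ (1-2/r') ≤ 2 := by
      have := Real.rpow_le_rpow_of_exponent_le (by norm_num : (1:ℝ) ≤ 2)
        (show 1-2/r' ≤ 1 by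
          have h9 : (0:ℝ) ≤ 2/r' := by positivity
          linarith)
      simpa using this
    calc (2:ℝ) ^ (1-2/r') * C ^ (1-2/r') * (lam ^ (-α)) ^ (1-2/r') *
          (C ^ (2/r') * (lam ^ (-γ)) ^ (2/r'))
        = (C ^ (1-2/r') * C ^ (2/r')) * ((lam ^ (-α)) ^ (1-2/r') * (lam ^ (-γ)) ^ (2/r')) *
          (2:ℝ) ^ (1-2/r') := by ring
      _ = C * lam ^ (-E2) * (2:ℝ) ^ (1-2/r') := by rw [hCe, hle2]
      _ ≤ C * lam ^ (-E2) * 2 := by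
          refine mul_le_mul_of_nonneg_left h2e (by positivity)
      _ = 2*C * lam ^ (-E2) := by ring
  -- sum over s bounded by full norm
  have hSPs : (∑ y ∈ s, (‖f y‖₊ : ℝ≥0∞) ^ r) ^ (1/r) ≤ eLpNorm f p Measure.count := by
    rw [hSP, SN]
    refine ENNReal.rpow_le_rpow ?_ (by positivity)
    exact Summable.sum_le_tsum s (fun _ _ => zero_le) ENNReal.summable
  have hmain : SN r' (A lam f1) ≤
      ENNReal.ofReal (2*C * lam ^ (-E1) + 2*C * lam ^ (-E2)) * eLpNorm f p Measure.count := by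
    have htri1 : SN r' (A lam f1) ≤ SN r' (M lam f1) + SN r' (E lam f1) :=
      SN_add (fun x => by rw [hsum lam f1 x]; exact nnnorm_add_le _ _) (by linarith)
    refine le_trans htri1 ?_
    have hM1 : SN r' (M lam f1) ≤ ENNReal.ofReal (2*C * lam ^ (-E1)) * eLpNorm f p Measure.count := by
      refine le_trans hMmaster ?_
      exact mul_le_mul' hcoefM hSPs
    have hE1' : SN r' (E lam f1) ≤ ENNReal.ofReal (2*C * lam ^ (-E2)) * eLpNorm f p Measure.count := by
      refine le_trans hEmaster ?_
      exact mul_le_mul' hcoefE hSPs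
    calc SN r' (M lam f1) + SN r' (E lam f1)
        ≤ ENNReal.ofReal (2*C * lam ^ (-E1)) * eLpNorm f p Measure.count +
          ENNReal.ofReal (2*C * lam ^ (-E2)) * eLpNorm f p Measure.count := add_le_add hM1 hE1'
      _ = ENNReal.ofReal (2*C * lam ^ (-E1) + 2*C * lam ^ (-E2)) * eLpNorm f p Measure.count := by
          rw [ENNReal.ofReal_add (by positivity) (by positivity), add_mul]
  calc SN r' (A lam f) ≤ SN r' (A lam f1) + SN r' (A lam f2) := htri
    _ ≤ ENNReal.ofReal (2*C * lam ^ (-E1) + 2*C * lam ^ (-E2)) * eLpNorm f p Measure.count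
        + (ε : ℝ≥0∞) := add_le_add hmain htail
    _ ≤ ENNReal.ofReal (4*C * (lam ^ (-E1) + lam ^ (-E2))) * eLpNorm f p Measure.count
        + (ε : ℝ≥0∞) := by
        refine add_le_add_left (mul_le_mul_left (ENNReal.ofReal_le_ofReal ?_) _) _
        have h1 : (0:ℝ) < lam ^ (-E1) := Real.rpow_pos_of_pos hlam0 _
        have h2 : (0:ℝ) < lam ^ (-E2) := Real.rpow_pos_of_pos hlam0 _
        nlinarith
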